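/- For every integer n ≥ 1, the number of n-tuples (e_1,…,e_n) of nonnegative integers satisfying 2^{e_1} + 2^{e_2} + ⋯ + 2^{e_n} = 2^{n−1} is odd. -/

import Mathlib

namespace Stmt4Aux


abbrev S (n k : ℕ) := {e : Fin n → ℕ // (∑ i, 2 ^ e i) = 2 ^ k}

lemma mem_bound {n k : ℕ} (e : S n k) (i : Fin n) : e.1 i ≤ k := by
  have h : 2 ^ (e.1 i) ≤ 2 ^ k := by
    calc 2 ^ (e.1 i) ≤ ∑ j, 2 ^ e.1 j :=
          Finset.single_le_sum (f := fun j => 2 ^ e.1 j) (fun j _ => Nat.zero_le _)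
            (Finset.mem_univ i)
      _ = 2 ^ k := e.2
  exact (Nat.pow_le_pow_iff_right one_lt_two).mp h

noncomputable instance instSFintype (n k : ℕ) : Fintype (S n k) :=
  Fintype.ofInjective
    (fun e : S n k => (fun i => (⟨e.1 i, Nat.lt_succ_of_le (mem_bound e i)⟩ : Fin (k+1))))
    (by
      intro a b h
      apply Subtype.ext
      funext i
      exact congrArg Fin.val (congrFun h i))

lemma parity_invol {α : Type*} [Fintype α] [DecidableEq α] (f : α → α)
    (hf : Function.Involutive f) :
    Fintype.card α ≡ Fintype.card {x // f x = x} [MOD 2] := by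
  have h2 : (show Function.End α from f) ^ 2 ^ 1 = 1 := by
    funext x
    show f (f x) = x
    exact hf x
  have h := Equiv.Perm.card_fixedPoints_modEq (p := 2) (n := 1) h2
  have e : (Function.fixedPoints (show Function.End α from f)) ≃ {x // f x = x} :=
    Equiv.subtypeEquivRight (fun x => by simp [Function.IsFixedPt, Function.fixedPoints])
  rwa [Fintype.card_congr e] at h

section Even
variable (m k : ℕ)

def p : Equiv.Perm (Fin (m + m)) :=
  (finSumFinEquiv.symm.trans (Equiv.sumComm (Fin m) (Fin m))).trans finSumFinEquiv

lemma p_castAdd (j : Fin m) : p m (Fin.castAdd m j) = Fin.natAdd m j := by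
  simp only [p, Equiv.trans_apply, finSumFinEquiv_symm_apply_castAdd, Equiv.sumComm_apply,
    Sum.swap_inl, finSumFinEquiv_apply_right]

lemma p_invol : Function.Involutive (p m) := by
  intro i
  simp [p]

lemma sum_split (e : Fin (m + m) → ℕ) :
    (∑ i, 2 ^ e i) =
      (∑ j : Fin m, 2 ^ e (Fin.castAdd m j)) + ∑ j : Fin m, 2 ^ e (Fin.natAdd m j) := by
  rw [← Equiv.sum_comp finSumFinEquiv (fun i => 2 ^ e i), Fintype.sum_sum_type]
  simp only [finSumFinEquiv_apply_left, finSumFinEquiv_apply_right]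

def fEven : S (m + m) (k + 1) → S (m + m) (k + 1) := fun e =>
  ⟨e.1 ∘ p m, by
    have := Equiv.sum_comp (p m) (fun i => 2 ^ e.1 i)
    simpa [Function.comp] using this.trans e.2⟩

lemma fEven_invol : Function.Involutive (fEven m k) := by
  intro e
  apply Subtype.ext
  funext i
  exact congrArg e.1 (p_invol m i)

lemma fixed_hfix (x : S (m + m) (k + 1)) (hx : fEven m k x = x) (j : Fin m) :
    x.1 (Fin.natAdd m j) = x.1 (Fin.castAdd m j) := by
  have h := congrFun (congrArg Subtype.val hx) (Fin.castAdd m j)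
  rw [show (fEven m k x).1 (Fin.castAdd m j) = x.1 (Fin.natAdd m j) by
    show x.1 (p m (Fin.castAdd m j)) = _
    rw [p_castAdd]] at h
  exact h

def evenEquiv : {x : S (m + m) (k + 1) // fEven m k x = x} ≃ S m k where
  toFun x := ⟨fun j => x.1.1 (Fin.castAdd m j), by
    have hs := x.1.2
    rw [sum_split] at hs
    conv_lhs at hs => rw [Finset.sum_congr rfl
      (fun j _ => by rw [fixed_hfix m k x.1 x.2 j] : ∀ j ∈ Finset.univ,
        2 ^ x.1.1 (Fin.natAdd m j) = 2 ^ x.1.1 (Fin.castAdd m j))]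
    have h2 : (2:ℕ)^(k+1) = 2^k + 2^k := by rw [pow_succ]; ring
    show ∑ j : Fin m, 2 ^ x.1.1 (Fin.castAdd m j) = 2 ^ k
    omega⟩
  invFun g := ⟨⟨fun i => Sum.elim g.1 g.1 (finSumFinEquiv.symm i), by
      rw [sum_split]
      simp only [finSumFinEquiv_symm_apply_castAdd, finSumFinEquiv_symm_apply_natAdd,
        Sum.elim_inl, Sum.elim_inr, g.2]
      rw [pow_succ]
      ring⟩, by
    apply Subtype.ext
    funext i
    show Sum.elim g.1 g.1 (finSumFinEquiv.symm (p m i)) = _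
    obtain ⟨s, rfl⟩ : ∃ s, finSumFinEquiv s = i := ⟨_, Equiv.apply_symm_apply _ _⟩
    show Sum.elim g.1 g.1 (finSumFinEquiv.symm (p m (finSumFinEquiv s))) =
      Sum.elim g.1 g.1 (finSumFinEquiv.symm (finSumFinEquiv s))
    rw [Equiv.symm_apply_apply]
    cases s with
    | inl j =>
      rw [finSumFinEquiv_apply_left, p_castAdd, finSumFinEquiv_symm_apply_natAdd]
      rfl
    | inr j =>
      rw [finSumFinEquiv_apply_right, ← p_castAdd (j := j), p_invol,
        finSumFinEquiv_symm_apply_castAdd]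
      rfl⟩
  left_inv x := by
    apply Subtype.ext; apply Subtype.ext
    funext i
    show Sum.elim _ _ (finSumFinEquiv.symm i) = x.1.1 i
    obtain ⟨s, rfl⟩ : ∃ s, finSumFinEquiv s = i := ⟨_, Equiv.apply_symm_apply _ _⟩
    show Sum.elim _ _ (finSumFinEquiv.symm (finSumFinEquiv s)) = _
    rw [Equiv.symm_apply_apply]
    cases s with
    | inl j =>
      rw [finSumFinEquiv_apply_left]
      rfl
    | inr j =>
      rw [finSumFinEquiv_apply_right]
      exact (fixed_hfix m k x.1 x.2 j).symm
  right_inv g := by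
    apply Subtype.ext
    funext j
    simp
end Even

section Odd
variable (m k : ℕ)

def q : Fin (m + m + 1) → Fin (m + m + 1) :=
  Fin.lastCases (Fin.last (m + m)) (fun i => (p m i).castSucc)

lemma q_last : q m (Fin.last (m + m)) = Fin.last (m + m) := by
  simp [q]

lemma q_castSucc (i : Fin (m + m)) : q m i.castSucc = (p m i).castSucc := by
  simp [q]

lemma q_invol : Function.Involutive (q m) := by
  intro i
  induction i using Fin.lastCases with
  | last => rw [q_last, q_last]
  | cast i => rw [q_castSucc, q_castSucc, p_invol]

lemma sum_split_odd (e : Fin (m + m + 1) → ℕ) :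
    (∑ i, 2 ^ e i) =
      ((∑ j : Fin m, 2 ^ e (Fin.castSucc (Fin.castAdd m j))) +
        ∑ j : Fin m, 2 ^ e (Fin.castSucc (Fin.natAdd m j))) + 2 ^ e (Fin.last (m + m)) := by
  rw [Fin.sum_univ_castSucc, sum_split m (fun i => e i.castSucc)]

def fOdd : S (m + m + 1) (k + 1) → S (m + m + 1) (k + 1) := fun e =>
  ⟨e.1 ∘ q m, by
    have := Equiv.sum_comp ((q_invol m).toPerm (q m)) (fun i => 2 ^ e.1 i)
    simpa [Function.comp, Function.Involutive.coe_toPerm] using this.trans e.2⟩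

lemma fOdd_invol : Function.Involutive (fOdd m k) := by
  intro e
  apply Subtype.ext
  funext i
  exact congrArg e.1 (q_invol m i)

lemma fixed_hfix_odd (x : S (m + m + 1) (k + 1)) (hx : fOdd m k x = x) (j : Fin m) :
    x.1 (Fin.castSucc (Fin.natAdd m j)) = x.1 (Fin.castSucc (Fin.castAdd m j)) := by
  have h := congrFun (congrArg Subtype.val hx) (Fin.castSucc (Fin.castAdd m j))
  rw [show (fOdd m k x).1 (Fin.castSucc (Fin.castAdd m j))
      = x.1 (Fin.castSucc (Fin.natAdd m j)) by
    show x.1 (q m (Fin.castSucc (Fin.castAdd m j))) = _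
    rw [q_castSucc, p_castAdd]] at h
  exact h

lemma last_pos (x : S (m + m + 1) (k + 1)) (hx : fOdd m k x = x) :
    1 ≤ x.1 (Fin.last (m + m)) ∧
      (∑ j : Fin m, 2 ^ x.1 (Fin.castSucc (Fin.castAdd m j))) +
        2 ^ (x.1 (Fin.last (m + m)) - 1) = 2 ^ k := by
  have hs := x.2
  rw [sum_split_odd] at hs
  conv_lhs at hs => rw [Finset.sum_congr rfl
    (fun j _ => by rw [fixed_hfix_odd m k x hx j] : ∀ j ∈ Finset.univ,
      2 ^ x.1 (Fin.castSucc (Fin.natAdd m j)) = 2 ^ x.1 (Fin.castSucc (Fin.castAdd m j)))]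
  set c := x.1 (Fin.last (m + m)) with hc
  have h2 : (2:ℕ)^(k+1) = 2^k + 2^k := by rw [pow_succ]; ring
  rcases Nat.eq_zero_or_pos c with h0 | h1
  · rw [h0, pow_zero] at hs
    omega
  · have h3 : (2:ℕ)^c = 2^(c-1) + 2^(c-1) := by
      conv_lhs => rw [← Nat.sub_add_cancel h1]
      rw [pow_succ]; ring
    exact ⟨h1, by omega⟩

def dbl (g : Fin (m + 1) → ℕ) : Fin (m + m + 1) → ℕ :=
  Fin.snoc (fun i => Sum.elim (fun j => g j.castSucc) (fun j => g j.castSucc)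
    (finSumFinEquiv.symm i)) (g (Fin.last m) + 1)

lemma dbl_last (g : Fin (m + 1) → ℕ) : dbl m g (Fin.last (m + m)) = g (Fin.last m) + 1 := by
  rw [dbl, Fin.snoc_last]

lemma dbl_castAdd (g : Fin (m + 1) → ℕ) (j : Fin m) :
    dbl m g (Fin.castSucc (Fin.castAdd m j)) = g j.castSucc := by
  rw [dbl, Fin.snoc_castSucc, finSumFinEquiv_symm_apply_castAdd, Sum.elim_inl]

lemma dbl_natAdd (g : Fin (m + 1) → ℕ) (j : Fin m) :
    dbl m g (Fin.castSucc (Fin.natAdd m j)) = g j.castSucc := by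
  rw [dbl, Fin.snoc_castSucc, finSumFinEquiv_symm_apply_natAdd, Sum.elim_inr]

lemma p_natAdd (j : Fin m) : p m (Fin.natAdd m j) = Fin.castAdd m j := by
  rw [← p_castAdd]
  exact p_invol m _

lemma dbl_q (g : Fin (m + 1) → ℕ) (i : Fin (m + m + 1)) : dbl m g (q m i) = dbl m g i := by
  induction i using Fin.lastCases with
  | last => rw [q_last]
  | cast i =>
    rw [q_castSucc]
    obtain ⟨s, rfl⟩ : ∃ s, finSumFinEquiv s = i := ⟨_, Equiv.apply_symm_apply _ _⟩
    cases s with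
    | inl j => rw [finSumFinEquiv_apply_left, p_castAdd, dbl_natAdd, dbl_castAdd]
    | inr j => rw [finSumFinEquiv_apply_right, p_natAdd, dbl_castAdd, dbl_natAdd]

lemma dbl_sum (g : S (m + 1) k) : (∑ i, 2 ^ dbl m g.1 i) = 2 ^ (k + 1) := by
  have hg := g.2
  rw [Fin.sum_univ_castSucc] at hg
  rw [sum_split_odd, dbl_last,
    Finset.sum_congr rfl (fun j _ => by rw [dbl_castAdd] :
      ∀ j ∈ Finset.univ, 2 ^ dbl m g.1 (Fin.castSucc (Fin.castAdd m j))
        = 2 ^ g.1 j.castSucc),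
    Finset.sum_congr rfl (fun j _ => by rw [dbl_natAdd] :
      ∀ j ∈ Finset.univ, 2 ^ dbl m g.1 (Fin.castSucc (Fin.natAdd m j))
        = 2 ^ g.1 j.castSucc)]
  have h2 : (2:ℕ)^(k+1) = 2^k + 2^k := by rw [pow_succ]; ring
  have h3 : (2:ℕ)^(g.1 (Fin.last m) + 1) = 2^(g.1 (Fin.last m)) + 2^(g.1 (Fin.last m)) := by
    rw [pow_succ]; ring
  omega

def oddEquiv : {x : S (m + m + 1) (k + 1) // fOdd m k x = x} ≃ S (m + 1) k where
  toFun x := ⟨Fin.snoc (fun j => x.1.1 (Fin.castSucc (Fin.castAdd m j)))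
      (x.1.1 (Fin.last (m + m)) - 1), by
    rw [Fin.sum_univ_castSucc]
    simp only [Fin.snoc_castSucc, Fin.snoc_last]
    exact (last_pos m k x.1 x.2).2⟩
  invFun g := ⟨⟨dbl m g.1, dbl_sum m k g⟩,
    Subtype.ext (funext fun i => dbl_q m g.1 i)⟩
  left_inv x := by
    apply Subtype.ext
    apply Subtype.ext
    funext i
    induction i using Fin.lastCases with
    | last =>
      simp only [dbl_last, Fin.snoc_last]
      exact Nat.sub_add_cancel (last_pos m k x.1 x.2).1
    | cast i =>
      obtain ⟨s, rfl⟩ : ∃ s, finSumFinEquiv s = i := ⟨_, Equiv.apply_symm_apply _ _⟩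
      cases s with
      | inl j => simp only [finSumFinEquiv_apply_left, dbl_castAdd, Fin.snoc_castSucc]
      | inr j =>
        simp only [finSumFinEquiv_apply_right, dbl_natAdd, Fin.snoc_castSucc]
        exact (fixed_hfix_odd m k x.1 x.2 j).symm
  right_inv g := by
    apply Subtype.ext
    funext j
    induction j using Fin.lastCases with
    | last =>
      simp only [Fin.snoc_last, dbl_last]
      omega
    | cast j =>
      simp only [Fin.snoc_castSucc, dbl_castAdd]

end Odd


lemma even_step (m k : ℕ) :
    Nat.card (S (m + m) (k + 1)) ≡ Nat.card (S m k) [MOD 2] := by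
  rw [Nat.card_eq_fintype_card, Nat.card_eq_fintype_card]
  have h := parity_invol (fEven m k) (fEven_invol m k)
  rwa [Fintype.card_congr (evenEquiv m k)] at h

lemma odd_step (m k : ℕ) :
    Nat.card (S (m + m + 1) (k + 1)) ≡ Nat.card (S (m + 1) k) [MOD 2] := by
  rw [Nat.card_eq_fintype_card, Nat.card_eq_fintype_card]
  have h := parity_invol (fOdd m k) (fOdd_invol m k)
  rwa [Fintype.card_congr (oddEquiv m k)] at h

lemma card_one (k : ℕ) : Nat.card (S 1 k) = 1 := by
  have hval : ∀ e : S 1 k, e.1 = fun _ => k := by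
    intro e
    funext i
    have h := e.2
    rw [Fin.sum_univ_one] at h
    have h0 : e.1 0 = k := Nat.pow_right_injective (le_refl 2) h
    have hi : i = 0 := Subsingleton.elim i 0
    rw [hi, h0]
  rw [Nat.card_eq_one_iff_unique]
  constructor
  · exact ⟨fun a b => Subtype.ext (by rw [hval a, hval b])⟩
  · exact ⟨⟨fun _ => k, by rw [Fin.sum_univ_one]⟩⟩

lemma main : ∀ k n, 1 ≤ n → n ≤ 2 ^ k → Nat.card (S n k) % 2 = 1 := by
  intro k
  induction k with
  | zero =>
    intro n h1 h2
    have : n = 1 := by simpa using le_antisymm h2 h1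
    subst this
    rw [card_one]
  | succ k ih =>
    intro n h1 h2
    rcases eq_or_lt_of_le h1 with h | h
    · subst h
      rw [card_one]
    · have h2' : n ≤ 2 * 2 ^ k := by
        rw [pow_succ] at h2; omega
      rcases Nat.even_or_odd n with ⟨m, rfl⟩ | ⟨m, rfl⟩
      · have h : Nat.card (S (m + m) (k + 1)) % 2 = Nat.card (S m k) % 2 := even_step m k
        rw [h]
        exact ih m (by omega) (by omega)
      · have e : 2 * m + 1 = m + m + 1 := by ring
        rw [e]
        have h : Nat.card (S (m + m + 1) (k + 1)) % 2 = Nat.card (S (m + 1) k) % 2 :=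
          odd_step m k
        rw [h]
        exact ih (m + 1) (by omega) (by omega)

end Stmt4Aux

/-- For every `n ≥ 1`, the number of `n`-tuples `(e 1, …, e n)` of nonnegative integers with
`2^(e 1) + ⋯ + 2^(e n) = 2^(n-1)` is odd. -/
theorem stmt_4 (n : ℕ) (hn : 1 ≤ n) :
    Odd (Nat.card {e : Fin n → ℕ // (∑ i, 2 ^ e i) = 2 ^ (n - 1)}) := by
  have hb : n ≤ 2 ^ (n - 1) := by
    have h := Nat.lt_two_pow_self (n := n - 1)
    omega
  exact Nat.odd_iff.mpr (Stmt4Aux.main (n - 1) n hn hb)
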